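/- In the limit L → -∞ the long-run return formula μ(f,D,U|L) = (1/(πθ))·( ln(1 + f(e^{U-D-c}-1))/Erfid(u,d) + ln(1 + f(e^{L-D-c}-1))/Erfid(d,l) ) converges, for fixed f ∈ (0,1], D < U, c < U - D, to μ_B(f,D,U) = ln(1 + f(e^{U-D-c}-1))/(πθ·Erfid(u,d)); in particular for f = 1, μ_B = (U-D-c)/(πθ·Erfid(u,d)). -/

import Mathlib

set_option maxHeartbeats 1000000

open Real intervalIntegral Filter

noncomputable def Erfi (x : ℝ) : ℝ := (2 / Real.sqrt π) * ∫ t in (0 : ℝ)..x, Real.exp (t ^ 2)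

noncomputable def Erfid (x y : ℝ) : ℝ := Erfi (x / Real.sqrt 2) - Erfi (y / Real.sqrt 2)

lemma Erfi_le_cube (y : ℝ) (hy : y ≤ 0) : Erfi y ≤ (2 / Real.sqrt π) * (y ^ 3 / 3) := by
  have h2 : (∫ t in (0:ℝ)..y, (t:ℝ) ^ 2) = y ^ 3 / 3 := by
    simp [integral_pow]; norm_num
  have h1 : (∫ t in (0:ℝ)..y, Real.exp (t ^ 2)) ≤ ∫ t in (0:ℝ)..y, t ^ 2 := by
    rw [intervalIntegral.integral_symm, intervalIntegral.integral_symm y 0]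
    apply neg_le_neg
    apply intervalIntegral.integral_mono_on hy
      ((continuous_pow 2).intervalIntegrable _ _)
      ((Real.continuous_exp.comp (continuous_pow 2)).intervalIntegrable _ _)
    intro t _
    simp only [Function.comp_apply]
    nlinarith [Real.add_one_le_exp (t ^ 2)]
  have h3 : (0:ℝ) ≤ 2 / Real.sqrt π := by positivity
  unfold Erfi
  rw [← h2]
  exact mul_le_mul_of_nonneg_left h1 h3

lemma bertram_aux (Sig f D c d : ℝ) (hSig : 0 < Sig) (hf : 0 < f) (hf1 : f ≤ 1) :
    Tendsto (fun L : ℝ =>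
      Real.log (1 + f * (Real.exp (L - D - c) - 1)) / Erfid d (L / Sig))
      atBot (nhds 0) := by
  have hE : True := trivial
  set E : ℝ := Erfi (d / Real.sqrt 2) with hEdef
  set s : ℝ := Sig * Real.sqrt 2 with hs
  have hspos : 0 < s := by positivity
  set k : ℝ := (2 / (3 * Real.sqrt π)) / s ^ 3 with hk
  have hkpos : 0 < k := by
    have : 0 < Real.sqrt π := Real.sqrt_pos.mpr Real.pi_pos
    positivity
  set C1 : ℝ := |Real.log f| + |D| + |c| + 1 with hC1
  have hC1nn : 0 ≤ C1 := by rw [hC1]; positivity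
  have hden_ev : ∀ᶠ L : ℝ in atBot, L ^ 2 ≤ E + k * (-L) ^ 3 := by
    have hpsi : Tendsto (fun t : ℝ => E + k * t ^ 3 - t ^ 2) atTop atTop := by
      have h1 : Tendsto (fun t : ℝ => t ^ 2 * (k * t - 1)) atTop atTop := by
        apply Tendsto.atTop_mul_atTop₀
        · exact tendsto_pow_atTop (by norm_num)
        · have := tendsto_atTop_add_const_right atTop (-1)
            (tendsto_id.const_mul_atTop hkpos)
          exact this.congr (fun t => by simp only [id_eq]; ring)
      have := tendsto_atTop_add_const_left atTop E h1
      exact this.congr (fun t => by ring)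
    have hneg : Tendsto (fun L : ℝ => -L) atBot atTop := tendsto_neg_atBot_atTop
    have := (hpsi.comp hneg).eventually_ge_atTop 0
    filter_upwards [this] with L hL
    simp only [Function.comp] at hL
    nlinarith [hL]
  apply squeeze_zero_norm' (a := fun L : ℝ => (C1 - L) / L ^ 2)
  · filter_upwards [hden_ev, eventually_lt_atBot (0:ℝ),
        eventually_le_atBot (D + c)] with L hden hL0 hLDc
    have harg_pos : 0 < 1 + f * (Real.exp (L - D - c) - 1) := by
      nlinarith [Real.exp_pos (L - D - c), mul_pos hf (Real.exp_pos (L - D - c))]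
    have hnum_le : Real.log (1 + f * (Real.exp (L - D - c) - 1)) ≤ 0 := by
      apply Real.log_nonpos (le_of_lt harg_pos)
      have : Real.exp (L - D - c) ≤ 1 := Real.exp_le_one_iff.mpr (by linarith)
      nlinarith
    have hnum_ge : Real.log f + (L - D - c) ≤
        Real.log (1 + f * (Real.exp (L - D - c) - 1)) := by
      have h1 : f * Real.exp (L - D - c) ≤ 1 + f * (Real.exp (L - D - c) - 1) := by
        nlinarith
      have h2 : Real.log (f * Real.exp (L - D - c)) ≤
          Real.log (1 + f * (Real.exp (L - D - c) - 1)) :=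
        Real.log_le_log (by positivity) h1
      rwa [Real.log_mul (ne_of_gt hf) (Real.exp_ne_zero _), Real.log_exp] at h2
    have hnum_abs : |Real.log (1 + f * (Real.exp (L - D - c) - 1))| ≤ C1 - L := by
      rw [abs_of_nonpos hnum_le]
      have hlf : -Real.log f ≤ |Real.log f| := neg_le_abs _
      have hD : D ≤ |D| := le_abs_self D
      have hcabs : c ≤ |c| := le_abs_self c
      simp only [hC1]
      linarith
    have hy : L / s ≤ 0 := le_of_lt (div_neg_of_neg_of_pos hL0 hspos)
    have hErfi := Erfi_le_cube (L / s) hy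
    have hden2 : E + k * (-L) ^ 3 ≤ Erfid d (L / Sig) := by
      have hLs : L / Sig / Real.sqrt 2 = L / s := by
        rw [hs, div_div]
      have hb : Erfi (L / Sig / Real.sqrt 2) ≤ (2 / Real.sqrt π) * ((L / s) ^ 3 / 3) := by
        rw [hLs]; exact hErfi
      have hrw : (2 / Real.sqrt π) * ((L / s) ^ 3 / 3) = -(k * (-L) ^ 3) := by
        rw [hk]
        field_simp
      rw [hrw] at hb
      simp only [Erfid, ← hEdef]
      linarith
    have hdenpos : 0 < Erfid d (L / Sig) := by
      nlinarith [sq_nonneg L, pow_pos (neg_pos.mpr hL0) 2]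
    rw [norm_div, Real.norm_eq_abs, Real.norm_eq_abs, abs_of_pos hdenpos]
    apply div_le_div₀ (by linarith) hnum_abs (by nlinarith)
    calc L ^ 2 ≤ E + k * (-L) ^ 3 := hden
      _ ≤ Erfid d (L / Sig) := hden2
  · have h1 : Tendsto (fun L : ℝ => C1 * (L⁻¹ * L⁻¹) - L⁻¹) atBot (nhds 0) := by
      have hinv : Tendsto (fun L : ℝ => L⁻¹) atBot (nhds 0) := by
        have h1 : Tendsto (fun x : ℝ => x⁻¹) atTop (nhds 0) := tendsto_inv_atTop_zero
        have h2 : Tendsto (fun L : ℝ => -L) atBot atTop := tendsto_neg_atBot_atTop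
        have h4 := (h1.comp h2).neg
        rw [neg_zero] at h4
        exact h4.congr (fun L => by simp [Function.comp, inv_neg])
      have := ((hinv.mul hinv).const_mul C1).sub hinv
      simpa using this
    apply h1.congr'
    filter_upwards [eventually_lt_atBot (0:ℝ)] with L hL0
    have hL : L ≠ 0 := ne_of_lt hL0
    field_simp

/-- As the stop-loss `L → -∞`, the long-run return converges to Bertram's long-run return;
for `f = 1` the latter equals `(U-D-c)/(πθ·Erfid(u,d))`. -/
theorem bertram_limit (θ Sig f D U c : ℝ) (hθ : 0 < θ) (hSig : 0 < Sig)
    (hDU : D < U) (hf : 0 < f) (hf1 : f ≤ 1) (hc : 0 < c) (hcU : c < U - D)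
    (u d : ℝ) (hu : u = U / Sig) (hd : d = D / Sig) :
    Tendsto (fun L : ℝ =>
        (1 / (π * θ)) *
          (Real.log (1 + f * (Real.exp (U - D - c) - 1)) / Erfid u d
            + Real.log (1 + f * (Real.exp (L - D - c) - 1)) / Erfid d (L / Sig)))
      atBot
      (nhds (Real.log (1 + f * (Real.exp (U - D - c) - 1)) / (π * θ * Erfid u d))) ∧
    (f = 1 →
      Real.log (1 + f * (Real.exp (U - D - c) - 1)) / (π * θ * Erfid u d)
        = (U - D - c) / (π * θ * Erfid u d)) := by
  constructor
  · have hg := bertram_aux Sig f D c d hSig hf hf1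
    have hmain := ((tendsto_const_nhds
        (x := Real.log (1 + f * (Real.exp (U - D - c) - 1)) / Erfid u d)
        (f := atBot)).add hg).const_mul (1 / (π * θ))
    rw [add_zero] at hmain
    convert hmain using 2
    rw [div_eq_mul_inv _ (π * θ * Erfid u d), div_eq_mul_inv _ (Erfid u d), mul_inv]
    ring
  · intro hf1'
    subst hf1'
    have h : (1:ℝ) + 1 * (Real.exp (U - D - c) - 1) = Real.exp (U - D - c) := by ring
    rw [h, Real.log_exp]
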